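/- Let I be an open real interval, (g_n) a sequence of differentiable functions on I converging pointwise to a differentiable function g. Suppose there exists a differentiable function f on I such that g_n + f is convex on I for every n. Then for every x in I, g_n'(x) converges to g'(x). -/

import Mathlib

open Filter

/-- Extension of Griffiths' lemma to differences of convex functions:
if differentiable `g n` converge pointwise on an open interval `I = Ioo a b`
to a differentiable `g`, and there is a differentiable `f` such that each
`g n + f` is convex on `I`, then `(g n)' → g'` pointwise on `I`. -/
theorem griffiths_difference_of_convex
    (a b : ℝ) (g : ℕ → ℝ → ℝ) (glim f : ℝ → ℝ)
    (hg : ∀ n, ∀ x ∈ Set.Ioo a b, DifferentiableAt ℝ (g n) x)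
    (hglim : ∀ x ∈ Set.Ioo a b, DifferentiableAt ℝ glim x)
    (hf : ∀ x ∈ Set.Ioo a b, DifferentiableAt ℝ f x)
    (hconv : ∀ n, ConvexOn ℝ (Set.Ioo a b) (fun x => g n x + f x))
    (hpt : ∀ x ∈ Set.Ioo a b, Tendsto (fun n => g n x) atTop (nhds (glim x))) :
    ∀ x ∈ Set.Ioo a b, Tendsto (fun n => deriv (g n) x) atTop (nhds (deriv glim x)) := by
  intro x hx
  set H : ℝ → ℝ := fun y => glim y + f y with hHdef
  have hHd : HasDerivAt H (deriv glim x + deriv f x) x :=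
    ((hglim x hx).hasDerivAt.add (hf x hx).hasDerivAt)
  -- slopes of H tend to its derivative
  have hslope : Tendsto (slope H x) (nhdsWithin x {x}ᶜ)
      (nhds (deriv glim x + deriv f x)) :=
    hasDerivAt_iff_tendsto_slope.mp hHd
  -- main claim: deriv (g n) x + deriv f x → deriv glim x + deriv f x
  have key : Tendsto (fun n => deriv (g n) x + deriv f x) atTop
      (nhds (deriv glim x + deriv f x)) := by
    rw [tendsto_order]
    constructor
    · -- lower bound, use points z < x
      intro c hc
      have hsl : Tendsto (slope H x) (nhdsWithin x (Set.Iio x))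
          (nhds (deriv glim x + deriv f x)) :=
        hslope.mono_left (nhdsWithin_mono x (fun y hy => ne_of_lt hy))
      have h1 : ∀ᶠ z in nhdsWithin x (Set.Iio x), c < slope H x z :=
        hsl.eventually (eventually_gt_nhds hc)
      have h2 : ∀ᶠ z in nhdsWithin x (Set.Iio x), z ∈ Set.Ioo a b :=
        mem_nhdsWithin_of_mem_nhds (isOpen_Ioo.mem_nhds hx)
      obtain ⟨z, ⟨hzc, hzI⟩, hzx⟩ := ((h1.and h2).and self_mem_nhdsWithin).exists
      -- slope of g n + f at z, x tends to slope H x z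
      have hslim : Tendsto (fun n => slope (fun y => g n y + f y) x z) atTop
          (nhds (slope H x z)) := by
        simp only [slope_def_field]
        exact (((hpt z hzI).add tendsto_const_nhds).sub
          ((hpt x hx).add tendsto_const_nhds)).div_const _
      have h3 : ∀ᶠ n in atTop, c < slope (fun y => g n y + f y) x z :=
        hslim.eventually (eventually_gt_nhds hzc)
      filter_upwards [h3] with n hn
      have hle : slope (fun y => g n y + f y) z x ≤ deriv (fun y => g n y + f y) x :=
        (hconv n).slope_le_deriv hzI hx hzx ((hg n x hx).add (hf x hx))
      rw [deriv_fun_add (hg n x hx) (hf x hx)] at hle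
      rw [slope_comm] at hn
      exact lt_of_lt_of_le hn hle
    · -- upper bound, use points y > x
      intro c hc
      have hsl : Tendsto (slope H x) (nhdsWithin x (Set.Ioi x))
          (nhds (deriv glim x + deriv f x)) :=
        hslope.mono_left (nhdsWithin_mono x (fun y hy => ne_of_gt hy))
      have h1 : ∀ᶠ y in nhdsWithin x (Set.Ioi x), slope H x y < c :=
        hsl.eventually (eventually_lt_nhds hc)
      have h2 : ∀ᶠ y in nhdsWithin x (Set.Ioi x), y ∈ Set.Ioo a b :=
        mem_nhdsWithin_of_mem_nhds (isOpen_Ioo.mem_nhds hx)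
      obtain ⟨y, ⟨hyc, hyI⟩, hxy⟩ := ((h1.and h2).and self_mem_nhdsWithin).exists
      have hslim : Tendsto (fun n => slope (fun t => g n t + f t) x y) atTop
          (nhds (slope H x y)) := by
        simp only [slope_def_field]
        exact (((hpt y hyI).add tendsto_const_nhds).sub
          ((hpt x hx).add tendsto_const_nhds)).div_const _
      have h3 : ∀ᶠ n in atTop, slope (fun t => g n t + f t) x y < c :=
        hslim.eventually (eventually_lt_nhds hyc)
      filter_upwards [h3] with n hn
      have hle : deriv (fun t => g n t + f t) x ≤ slope (fun t => g n t + f t) x y :=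
        (hconv n).deriv_le_slope hx hyI hxy ((hg n x hx).add (hf x hx))
      rw [deriv_fun_add (hg n x hx) (hf x hx)] at hle
      exact lt_of_le_of_lt hle hn
  have := key.sub_const (deriv f x)
  simpa using this
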